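/- Let A = ℂ[a, b, x, y, z] and let ξ be the ℂ-derivation of A defined by ξ(a) = 0, ξ(b) = 0, ξ(x) = a², ξ(y) = ax + b, ξ(z) = y, extended uniquely (by the quotient rule) to a derivation ξ̂ of the rational function field ℂ(a, b, x, y, z). Set I₁ = a, I₂ = b, I₃ = ax² + 2bx − 2a²y, I₄ = 2ax³ + 3bx² − 6a²xy + 6a⁴z. Then a rational function f ∈ ℂ(a, b, x, y, z) satisfies ξ̂(f) = 0 if and only if f lies in the subfield ℂ(I₁, I₂, I₃, I₄). That is, I₁, I₂, I₃, I₄ generate the field of rational absolute invariants of ξ. -/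

import Mathlib

set_option maxHeartbeats 1000000
set_option synthInstance.maxHeartbeats 400000


open MvPolynomial

/-- The polynomial ring `A = ℂ[a, b, x, y, z]`, with variable indices
`0 ↦ a`, `1 ↦ b`, `2 ↦ x`, `3 ↦ y`, `4 ↦ z`. -/
abbrev A5 : Type := MvPolynomial (Fin 5) ℂ

/-- The rational function field `ℂ(a, b, x, y, z)`. -/
abbrev K5 : Type := FractionRing A5

/-- The embedding `A → ℂ(a, b, x, y, z)`. -/
noncomputable def ι : A5 →+* K5 := algebraMap A5 K5

/-- `I₁ = a`. -/
noncomputable def I1 : A5 := X 0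
/-- `I₂ = b`. -/
noncomputable def I2 : A5 := X 1
/-- `I₃ = ax² + 2bx − 2a²y`. -/
noncomputable def I3 : A5 := X 0 * X 2 ^ 2 + 2 * X 1 * X 2 - 2 * X 0 ^ 2 * X 3
/-- `I₄ = 2ax³ + 3bx² − 6a²xy + 6a⁴z`. -/
noncomputable def I4 : A5 :=
  2 * X 0 * X 2 ^ 3 + 3 * X 1 * X 2 ^ 2 - 6 * X 0 ^ 2 * X 2 * X 3 + 6 * X 0 ^ 4 * X 4

abbrev A4 : Type := MvPolynomial (Fin 4) ℂ

noncomputable def ee : A5 ≃ₐ[ℂ] Polynomial A4 :=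
  (renameEquiv ℂ (Equiv.swap 0 2)).trans (finSuccEquiv ℂ 4)

lemma swap02 : (Equiv.swap (0:Fin 5) 2) 0 = 2 := by decide
lemma swap20 : (Equiv.swap (0:Fin 5) 2) 2 = 0 := by decide
lemma swap11 : (Equiv.swap (0:Fin 5) 2) 1 = 1 := by decide
lemma swap33 : (Equiv.swap (0:Fin 5) 2) 3 = 3 := by decide
lemma swap44 : (Equiv.swap (0:Fin 5) 2) 4 = 4 := by decide

lemma ee0 : ee (X 0) = Polynomial.C (X 1) := by
  rw [ee, AlgEquiv.trans_apply, renameEquiv_apply, rename_X, swap02,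
    show (2:Fin 5) = Fin.succ 1 from rfl, finSuccEquiv_X_succ]
lemma ee1 : ee (X 1) = Polynomial.C (X 0) := by
  rw [ee, AlgEquiv.trans_apply, renameEquiv_apply, rename_X, swap11,
    show (1:Fin 5) = Fin.succ 0 from rfl, finSuccEquiv_X_succ]
lemma ee2 : ee (X 2) = Polynomial.X := by
  rw [ee, AlgEquiv.trans_apply, renameEquiv_apply, rename_X, swap20, finSuccEquiv_X_zero]
lemma ee3 : ee (X 3) = Polynomial.C (X 2) := by
  rw [ee, AlgEquiv.trans_apply, renameEquiv_apply, rename_X, swap33,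
    show (3:Fin 5) = Fin.succ 2 from rfl, finSuccEquiv_X_succ]
lemma ee4 : ee (X 4) = Polynomial.C (X 3) := by
  rw [ee, AlgEquiv.trans_apply, renameEquiv_apply, rename_X, swap44,
    show (4:Fin 5) = Fin.succ 3 from rfl, finSuccEquiv_X_succ]
lemma eeC (c : ℂ) : ee (C c) = Polynomial.C (C c) := by
  have h1 : (C c : A5) = algebraMap ℂ A5 c := rfl
  have h2 : algebraMap ℂ (Polynomial A4) c = Polynomial.C (C c) := rfl
  rw [h1, AlgEquiv.commutes, h2]

noncomputable def DD : A5 → A5 := fun p => ee.symm (ee (X 0 ^ 2) * Polynomial.derivative (ee p))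

lemma DD_add (p q : A5) : DD (p + q) = DD p + DD q := by
  simp [DD, mul_add]

lemma DD_mul (p q : A5) : DD (p * q) = p * DD q + q * DD p := by
  apply ee.injective
  simp only [DD, map_mul, map_add, AlgEquiv.apply_symm_apply, Polynomial.derivative_mul]
  ring

lemma DD_C (c : ℂ) : DD (C c) = 0 := by simp [DD, eeC]
lemma DD_X0 : DD (X 0) = 0 := by simp [DD, ee0]
lemma DD_X1 : DD (X 1) = 0 := by simp [DD, ee1]
lemma DD_X2 : DD (X 2) = X 0 ^ 2 := by simp [DD, ee2]
lemma DD_X3 : DD (X 3) = 0 := by simp [DD, ee3]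
lemma DD_X4 : DD (X 4) = 0 := by simp [DD, ee4]

lemma ι_inj : Function.Injective ι := IsFractionRing.injective A5 K5
lemma ι_ne_zero {p : A5} (hp : p ≠ 0) : ι p ≠ 0 := by
  intro h; exact hp (ι_inj (by simpa using h))

lemma c_ne : (ee (X 0 ^ 2) : Polynomial A4) ≠ 0 := by
  simp only [map_pow, ee0]
  exact pow_ne_zero _ (Polynomial.C_ne_zero.mpr (X_ne_zero _))

/-- If `DD g * h = g * DD h` with `g, h` relatively prime and nonzero, then both have
zero `x`-derivative. -/
lemma deriv_zero_of_relprime (g h : A5) (hg : g ≠ 0) (hh : h ≠ 0) (hrp : IsRelPrime g h)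
    (hrel : DD g * h = g * DD h) :
    Polynomial.derivative (ee g) = 0 ∧ Polynomial.derivative (ee h) = 0 := by
  set G := ee g with hG
  set H := ee h with hH
  set c := ee (X 0 ^ 2) with hc
  have hrel' : c * Polynomial.derivative G * H = G * (c * Polynomial.derivative H) := by
    have := congrArg ee hrel
    simpa only [map_mul, DD, AlgEquiv.apply_symm_apply] using this
  have key : Polynomial.derivative G * H = G * Polynomial.derivative H :=
    mul_left_cancel₀ c_ne (by rw [show c * (Polynomial.derivative G * H)
      = c * Polynomial.derivative G * H by ring, hrel']; ring)
  have hG0 : G ≠ 0 := fun h0 => hg (by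
    have := congrArg ee.symm h0
    rwa [hG, AlgEquiv.symm_apply_apply, map_zero] at this)
  have hH0 : H ≠ 0 := fun h0 => hh (by
    have := congrArg ee.symm h0
    rwa [hH, AlgEquiv.symm_apply_apply, map_zero] at this)
  have hrpGH : IsRelPrime G H := by
    intro p hpG hpH
    have h1 : ee.symm p ∣ g := by
      have := map_dvd ee.symm hpG; rwa [hG, AlgEquiv.symm_apply_apply] at this
    have h2 : ee.symm p ∣ h := by
      have := map_dvd ee.symm hpH; rwa [hH, AlgEquiv.symm_apply_apply] at this
    have := (hrp h1 h2).map ee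
    simpa using this
  constructor
  · by_contra hd
    have hdvd : G ∣ Polynomial.derivative G :=
      hrpGH.dvd_of_dvd_mul_right ⟨Polynomial.derivative H, key⟩
    have h1 : G.degree ≤ (Polynomial.derivative G).degree := Polynomial.degree_le_of_dvd hdvd hd
    exact absurd h1 (not_le.mpr (Polynomial.degree_derivative_lt hG0))
  · by_contra hd
    have hdvd : H ∣ Polynomial.derivative H := by
      refine (hrpGH.symm).dvd_of_dvd_mul_right ?_
      exact ⟨Polynomial.derivative G, by linear_combination -key⟩
    have h1 : H.degree ≤ (Polynomial.derivative H).degree := Polynomial.degree_le_of_dvd hdvd hd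
    exact absurd h1 (not_le.mpr (Polynomial.degree_derivative_lt hH0))

/-- The generating set for the target subfield in `(a, b, y, z)`-coordinates. -/
noncomputable def GSet : Set K5 :=
  (Set.range fun c : ℂ => ι (C c)) ∪ {ι (X 0), ι (X 1), ι (X 3), ι (X 4)}

lemma mem_closure4 (q : A4) : ι (ee.symm (Polynomial.C q)) ∈ Subfield.closure GSet := by
  induction q using MvPolynomial.induction_on with
  | C r =>
    have : ee.symm (Polynomial.C (C r)) = C r := by
      rw [← eeC, AlgEquiv.symm_apply_apply]
    rw [this]
    exact Subfield.subset_closure (Or.inl ⟨r, rfl⟩)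
  | add p q hp hq =>
    rw [map_add, map_add, map_add]
    exact Subfield.add_mem _ hp hq
  | mul_X p i hp =>
    rw [map_mul, map_mul, map_mul]
    refine Subfield.mul_mem _ hp ?_
    have f0 : ee.symm (Polynomial.C (X (0 : Fin 4))) = X 1 := by
      rw [← ee1, AlgEquiv.symm_apply_apply]
    have f1 : ee.symm (Polynomial.C (X (1 : Fin 4))) = X 0 := by
      rw [← ee0, AlgEquiv.symm_apply_apply]
    have f2 : ee.symm (Polynomial.C (X (2 : Fin 4))) = X 3 := by
      rw [← ee3, AlgEquiv.symm_apply_apply]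
    have f3 : ee.symm (Polynomial.C (X (3 : Fin 4))) = X 4 := by
      rw [← ee4, AlgEquiv.symm_apply_apply]
    have hX : ι (ee.symm (Polynomial.C (X i))) ∈ GSet := by
      fin_cases i
      · exact show ι (ee.symm (Polynomial.C (X (0 : Fin 4)))) ∈ GSet by
          rw [f0]; exact Or.inr (by simp)
      · exact show ι (ee.symm (Polynomial.C (X (1 : Fin 4)))) ∈ GSet by
          rw [f1]; exact Or.inr (by simp)
      · exact show ι (ee.symm (Polynomial.C (X (2 : Fin 4)))) ∈ GSet by
          rw [f2]; exact Or.inr (by simp)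
      · exact show ι (ee.symm (Polynomial.C (X (3 : Fin 4)))) ∈ GSet by
          rw [f3]; exact Or.inr (by simp)
    exact Subfield.subset_closure hX

/-- Core lemma: constants of the derivation `a² ∂/∂x` lie in `ℂ(a, b, y, z)`. -/
lemma core (η : K5 → K5)
    (hmul : ∀ f g, η (f * g) = η f * g + f * η g)
    (hι : ∀ p, η (ι p) = ι (DD p)) (f : K5) (hf : η f = 0) :
    f ∈ Subfield.closure GSet := by
  obtain ⟨g0, h0, hmem, hfr⟩ := IsFractionRing.div_surjective (A := A5) f
  have hh0 : h0 ≠ 0 := nonZeroDivisors.ne_zero hmem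
  by_cases hg0 : g0 = 0
  · have : f = 0 := by rw [← hfr, hg0, map_zero, zero_div]
    rw [this]; exact Subfield.zero_mem _
  obtain ⟨g, h, c, hrp, hcg, hch⟩ :=
    UniqueFactorizationMonoid.exists_reduced_factors' g0 h0 hh0
  have hc : c ≠ 0 := fun h0' => hg0 (by rw [← hcg, h0', zero_mul])
  have hg : g ≠ 0 := fun h0' => hg0 (by rw [← hcg, h0', mul_zero])
  have hh : h ≠ 0 := fun h0' => hh0 (by rw [← hch, h0', mul_zero])
  have hf2 : f = ι g / ι h := by
    rw [← hfr, ← hcg, ← hch, map_mul, map_mul]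
    exact mul_div_mul_left _ _ (ι_ne_zero hc)
  have hιh : (ι h : K5) ≠ 0 := ι_ne_zero hh
  have hfh : f * ι h = ι g := by rw [hf2, div_mul_cancel₀ _ hιh]
  have hkey : ι g * ι (DD h) = ι (DD g) * ι h := by
    have := congrArg η hfh
    rw [hmul, hf, hι, hι, zero_mul, zero_add] at this
    rw [hf2, div_mul_eq_mul_div, div_eq_iff hιh] at this
    linear_combination this
  have hkey2 : DD g * h = g * DD h := by
    apply ι_inj
    rw [map_mul, map_mul, ← hkey]
  obtain ⟨hdg, hdh⟩ := deriv_zero_of_relprime g h hg hh hrp hkey2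
  have hgC : g = ee.symm (Polynomial.C ((ee g).coeff 0)) := by
    rw [← Polynomial.eq_C_of_derivative_eq_zero hdg, AlgEquiv.symm_apply_apply]
  have hhC : h = ee.symm (Polynomial.C ((ee h).coeff 0)) := by
    rw [← Polynomial.eq_C_of_derivative_eq_zero hdh, AlgEquiv.symm_apply_apply]
  rw [hf2, hgC, hhC]
  exact Subfield.div_mem _ (mem_closure4 _) (mem_closure4 _)

/-- The polynomial substitution `a ↦ a, b ↦ b, x ↦ x, y ↦ I₃, z ↦ I₄`. -/
noncomputable def ΦA : A5 →+* A5 :=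
  eval₂Hom C (fun i => ![X 0, X 1, X 2, I3, I4] i)

lemma ΦA_C (c : ℂ) : ΦA (C c) = C c := by simp [ΦA]
lemma ΦA_X0 : ΦA (X 0) = X 0 := by simp [ΦA]
lemma ΦA_X1 : ΦA (X 1) = X 1 := by simp [ΦA]
lemma ΦA_X2 : ΦA (X 2) = X 2 := by simp [ΦA]
lemma ΦA_X3 : ΦA (X 3) = I3 := by simp [ΦA]
lemma ΦA_X4 : ΦA (X 4) = I4 := by simp [ΦA]

noncomputable def p3 : A5 := X 0 * X 2 ^ 2 + 2 * X 1 * X 2 - X 3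
noncomputable def q3 : A5 := 2 * X 0 ^ 2
noncomputable def p4 : A5 := X 4 + X 0 * X 2 ^ 3 + 3 * X 1 * X 2 ^ 2 - 3 * X 2 * X 3
noncomputable def q4 : A5 := 6 * X 0 ^ 4

lemma hq3 : q3 ≠ 0 := by
  simp only [q3]
  intro h
  have := congrArg (MvPolynomial.eval (fun _ => (1:ℂ))) h
  simp at this
lemma hq4 : q4 ≠ 0 := by
  simp only [q4]
  intro h
  have := congrArg (MvPolynomial.eval (fun _ => (1:ℂ))) h
  simp at this

/-- The substitution into the fraction field: `a ↦ a, b ↦ b, x ↦ x`,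
`y ↦ (ax² + 2bx − y)/(2a²)`, `z ↦ (z + ax³ + 3bx² − 3xy)/(6a⁴)`. -/
noncomputable def σA : A5 →+* K5 :=
  eval₂Hom (ι.comp MvPolynomial.C) (fun i => ![ι (X 0), ι (X 1), ι (X 2), ι p3 / ι q3, ι p4 / ι q4] i)

lemma σA_C (c : ℂ) : σA (C c) = ι (C c) := by simp [σA]
lemma σA_X0 : σA (X 0) = ι (X 0) := by simp [σA]
lemma σA_X1 : σA (X 1) = ι (X 1) := by simp [σA]
lemma σA_X2 : σA (X 2) = ι (X 2) := by simp [σA]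
lemma σA_X3 : σA (X 3) = ι p3 / ι q3 := by simp [σA]
lemma σA_X4 : σA (X 4) = ι p4 / ι q4 := by simp [σA]

lemma ι_cancel (q r : A5) (hq : q ≠ 0) : ι (q * r) / ι q = ι r := by
  rw [map_mul, mul_comm, mul_div_assoc, div_self (ι_ne_zero hq), mul_one]

lemma σA_comp_ΦA : σA.comp ΦA = ι := by
  apply MvPolynomial.ringHom_ext
  · intro r
    simp [ΦA_C, σA_C]
  · intro i
    fin_cases i
    · simp [ΦA_X0, σA_X0]
    · simp [ΦA_X1, σA_X1]
    · simp [ΦA_X2, σA_X2]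
    · show σA (ΦA (X 3)) = ι (X 3)
      rw [ΦA_X3, I3]
      simp only [map_mul, map_add, map_sub, map_pow, map_ofNat, σA_X0, σA_X1, σA_X2, σA_X3]
      field_simp [ι_ne_zero hq3]
      simp only [p3, q3, map_mul, map_add, map_sub, map_pow, map_ofNat]
      ring
    · show σA (ΦA (X 4)) = ι (X 4)
      rw [ΦA_X4, I4]
      simp only [map_mul, map_add, map_sub, map_pow, map_ofNat, σA_X0, σA_X1, σA_X2, σA_X3,
        σA_X4]
      field_simp [ι_ne_zero hq3, ι_ne_zero hq4]
      simp only [p3, q3, p4, q4, map_mul, map_add, map_sub, map_pow, map_ofNat]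
      ring

lemma ΦA_inj : Function.Injective ΦA := by
  intro p q h
  have : σA (ΦA p) = σA (ΦA q) := by rw [h]
  have h2 : ι p = ι q := by
    rw [← RingHom.comp_apply, ← RingHom.comp_apply, σA_comp_ΦA] at this
    exact this
  exact ι_inj h2

lemma ιΦA_inj : Function.Injective (ι.comp ΦA) := fun p q h => ΦA_inj (ι_inj h)

/-- The lift of `ι ∘ ΦA` to `K5 → K5`. -/
noncomputable def ΨK : K5 →+* K5 := IsFractionRing.lift ιΦA_inj

lemma ΨK_ι (p : A5) : ΨK (ι p) = ι (ΦA p) := IsFractionRing.lift_algebraMap ιΦA_inj p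

lemma ΨK_comp_σA : ΨK.comp σA = ι := by
  apply MvPolynomial.ringHom_ext
  · intro r
    simp only [RingHom.comp_apply, σA_C, ΨK_ι, ΦA_C]
  · intro i
    fin_cases i
    · show ΨK (σA (X 0)) = ι (X 0)
      rw [σA_X0, ΨK_ι, ΦA_X0]
    · show ΨK (σA (X 1)) = ι (X 1)
      rw [σA_X1, ΨK_ι, ΦA_X1]
    · show ΨK (σA (X 2)) = ι (X 2)
      rw [σA_X2, ΨK_ι, ΦA_X2]
    · show ΨK (σA (X 3)) = ι (X 3)
      rw [σA_X3, map_div₀, ΨK_ι, ΨK_ι]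
      have h1 : ΦA p3 = q3 * X 3 := by
        simp only [p3, map_sub, map_add, map_mul, map_pow, map_ofNat, ΦA_X0, ΦA_X1, ΦA_X2,
          ΦA_X3, I3, q3]
        ring
      have h2 : ΦA q3 = q3 := by
        simp only [q3, map_mul, map_pow, map_ofNat, ΦA_X0]
      rw [h1, h2, ι_cancel _ _ hq3]
    · show ΨK (σA (X 4)) = ι (X 4)
      rw [σA_X4, map_div₀, ΨK_ι, ΨK_ι]
      have h1 : ΦA p4 = q4 * X 4 := by
        simp only [p4, map_sub, map_add, map_mul, map_pow, map_ofNat, ΦA_X0, ΦA_X1, ΦA_X2,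
          ΦA_X3, ΦA_X4, I3, I4, q4]
        ring
      have h2 : ΦA q4 = q4 := by
        simp only [q4, map_mul, map_pow, map_ofNat, ΦA_X0]
      rw [h1, h2, ι_cancel _ _ hq4]

lemma σA_inj : Function.Injective σA := by
  intro p q h
  have : ΨK (σA p) = ΨK (σA q) := by rw [h]
  rw [← RingHom.comp_apply, ← RingHom.comp_apply, ΨK_comp_σA] at this
  exact ι_inj this

/-- The lift of `σA` to `K5 → K5`. -/
noncomputable def σK : K5 →+* K5 := IsFractionRing.lift σA_inj

lemma σK_ι (p : A5) : σK (ι p) = σA p := IsFractionRing.lift_algebraMap σA_inj p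

lemma ΨK_σK (f : K5) : ΨK (σK f) = f := by
  have : ΨK.comp σK = RingHom.id K5 := by
    apply IsLocalization.ringHom_ext (nonZeroDivisors A5)
    apply RingHom.ext; intro p
    simp only [RingHom.comp_apply, RingHom.id_apply]
    show ΨK (σK (ι p)) = ι p
    rw [σK_ι, ← RingHom.comp_apply, ΨK_comp_σA]
  exact congrArg (fun g => g f) this |>.trans rfl |>.symm ▸ (by
    have := RingHom.congr_fun this f
    simpa using this)

lemma σK_ΨK (f : K5) : σK (ΨK f) = f := by
  have : σK.comp ΨK = RingHom.id K5 := by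
    apply IsLocalization.ringHom_ext (nonZeroDivisors A5)
    apply RingHom.ext; intro p
    simp only [RingHom.comp_apply, RingHom.id_apply]
    show σK (ΨK (ι p)) = ι p
    rw [ΨK_ι, σK_ι, ← RingHom.comp_apply, σA_comp_ΦA]
  have := RingHom.congr_fun this f
  simpa using this

section WithDerivation
variable (ξ : Derivation ℂ A5 A5)
    (ha : ξ (X 0) = 0) (hb : ξ (X 1) = 0) (hx : ξ (X 2) = X 0 ^ 2)
    (hy : ξ (X 3) = X 0 * X 2 + X 1) (hz : ξ (X 4) = X 3)

include ha hb hx hy in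
lemma ξI3 : ξ I3 = 0 := by
  have h2 : ξ (2 : A5) = 0 := by
    rw [show (2:A5) = algebraMap ℂ A5 (2:ℂ) from (map_ofNat (algebraMap ℂ A5) 2).symm]
    exact Derivation.map_algebraMap ξ 2
  simp only [I3, map_add, map_sub, Derivation.leibniz, Derivation.leibniz_pow, ha, hb, hx, hy,
    h2, smul_eq_mul]
  ring

include ha hb hx hy hz in
lemma ξI4 : ξ I4 = 0 := by
  have h2 : ξ (2 : A5) = 0 := by
    rw [show (2:A5) = algebraMap ℂ A5 (2:ℂ) from (map_ofNat (algebraMap ℂ A5) 2).symm]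
    exact Derivation.map_algebraMap ξ 2
  have h3 : ξ (3 : A5) = 0 := by
    rw [show (3:A5) = algebraMap ℂ A5 (3:ℂ) from (map_ofNat (algebraMap ℂ A5) 3).symm]
    exact Derivation.map_algebraMap ξ 3
  have h6 : ξ (6 : A5) = 0 := by
    rw [show (6:A5) = algebraMap ℂ A5 (6:ℂ) from (map_ofNat (algebraMap ℂ A5) 6).symm]
    exact Derivation.map_algebraMap ξ 6
  simp only [I4, map_add, map_sub, Derivation.leibniz, Derivation.leibniz_pow, ha, hb, hx, hy,
    hz, h2, h3, h6, smul_eq_mul]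
  ring

include ha hb hx hy hz in
/-- Transport of the derivation through the substitution: `σA (ξ (ΦA p)) = ι (DD p)`. -/
lemma key_transport (p : A5) : σA (ξ (ΦA p)) = ι (DD p) := by
  induction p using MvPolynomial.induction_on with
  | C c => rw [ΦA_C, DD_C, map_zero, show ξ (C c) = 0 from Derivation.map_algebraMap ξ c,
      map_zero]
  | add p q hp hq => rw [map_add, map_add, map_add, hp, hq, DD_add, map_add]
  | mul_X p i hp =>
    have hXi : σA (ξ (ΦA (X i))) = ι (DD (X i)) := by
      fin_cases i
      · show σA (ξ (ΦA (X 0))) = ι (DD (X 0))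
        rw [ΦA_X0, ha, DD_X0, map_zero, map_zero]
      · show σA (ξ (ΦA (X 1))) = ι (DD (X 1))
        rw [ΦA_X1, hb, DD_X1, map_zero, map_zero]
      · show σA (ξ (ΦA (X 2))) = ι (DD (X 2))
        rw [ΦA_X2, hx, DD_X2, map_pow, map_pow, σA_X0]
      · show σA (ξ (ΦA (X 3))) = ι (DD (X 3))
        rw [ΦA_X3, ξI3 ξ ha hb hx hy, DD_X3, map_zero, map_zero]
      · show σA (ξ (ΦA (X 4))) = ι (DD (X 4))
        rw [ΦA_X4, ξI4 ξ ha hb hx hy hz, DD_X4, map_zero, map_zero]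
    rw [map_mul, Derivation.leibniz, map_add, smul_eq_mul, smul_eq_mul, map_mul, map_mul,
      hp, hXi, DD_mul, map_add, map_mul, map_mul]
    have hp' : σA (ΦA p) = ι p := RingHom.congr_fun σA_comp_ΦA p
    have hXi' : σA (ΦA (X i)) = ι (X i) := RingHom.congr_fun σA_comp_ΦA (X i)
    rw [hp', hXi']

end WithDerivation

/-- Let `ξ` be the ℂ-derivation of `A = ℂ[a, b, x, y, z]` with
`ξ(a) = 0`, `ξ(b) = 0`, `ξ(x) = a²`, `ξ(y) = ax + b`, `ξ(z) = y`, and let `ξ̂` be its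
unique extension (by the quotient rule) to a derivation of the rational function field
`ℂ(a, b, x, y, z)`.  Then `ξ̂(f) = 0` if and only if `f` lies in the subfield
`ℂ(I₁, I₂, I₃, I₄)`: these four invariants generate the field of rational absolute
invariants of `ξ`. -/
theorem rational_invariants_field_generated
    (ξ : Derivation ℂ A5 A5)
    (ha : ξ (X 0) = 0) (hb : ξ (X 1) = 0) (hx : ξ (X 2) = X 0 ^ 2)
    (hy : ξ (X 3) = X 0 * X 2 + X 1) (hz : ξ (X 4) = X 3)
    (ξ' : K5 → K5)
    (hadd : ∀ f g : K5, ξ' (f + g) = ξ' f + ξ' g)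
    (hmul : ∀ f g : K5, ξ' (f * g) = ξ' f * g + f * ξ' g)
    (hext : ∀ p : A5, ξ' (ι p) = ι (ξ p)) :
    ∀ f : K5,
      ξ' f = 0 ↔
      f ∈ Subfield.closure
        ((Set.range fun c : ℂ => ι (C c)) ∪ {ι I1, ι I2, ι I3, ι I4}) := by
  have hz0 : ξ' 0 = 0 := by
    have h := hadd 0 0
    rw [add_zero] at h
    exact (left_eq_add.mp h)
  have h1 : ξ' 1 = 0 := by
    have h := hmul 1 1
    simp only [mul_one, one_mul] at h
    exact (left_eq_add.mp h)
  intro f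
  constructor
  · -- hard direction
    intro hf
    have hηmul : ∀ s t : K5, (fun t => σK (ξ' (ΨK t))) (s * t)
        = (fun t => σK (ξ' (ΨK t))) s * t + s * (fun t => σK (ξ' (ΨK t))) t := by
      intro s t
      simp only [map_mul, hmul, map_add, map_mul]
      rw [σK_ΨK, σK_ΨK]
    have hηι : ∀ p : A5, (fun t => σK (ξ' (ΨK t))) (ι p) = ι (DD p) := by
      intro p
      simp only [ΨK_ι, hext]
      rw [σK_ι]
      exact key_transport ξ ha hb hx hy hz p
    have hf1 : (fun t => σK (ξ' (ΨK t))) (σK f) = 0 := by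
      simp only [ΨK_σK, hf, map_zero]
    have hmem : σK f ∈ Subfield.closure GSet := core (fun t => σK (ξ' (ΨK t))) hηmul hηι _ hf1
    have hcomap : Subfield.closure GSet ≤ Subfield.comap ΨK (Subfield.closure
        ((Set.range fun c : ℂ => ι (C c)) ∪ {ι I1, ι I2, ι I3, ι I4})) := by
      apply Subfield.closure_le.mpr
      intro t ht
      unfold GSet at ht
      rcases ht with ⟨c, rfl⟩ | h
      · rw [SetLike.mem_coe, Subfield.mem_comap, ΨK_ι, ΦA_C]
        exact Subfield.subset_closure (Or.inl ⟨c, rfl⟩)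
      · simp only [Set.mem_insert_iff, Set.mem_singleton_iff] at h
        rcases h with rfl | rfl | rfl | rfl
        · rw [SetLike.mem_coe, Subfield.mem_comap, ΨK_ι, ΦA_X0]
          exact Subfield.subset_closure (Or.inr (by simp [I1]))
        · rw [SetLike.mem_coe, Subfield.mem_comap, ΨK_ι, ΦA_X1]
          exact Subfield.subset_closure (Or.inr (by simp [I2]))
        · rw [SetLike.mem_coe, Subfield.mem_comap, ΨK_ι, ΦA_X3]
          exact Subfield.subset_closure (Or.inr (by simp))
        · rw [SetLike.mem_coe, Subfield.mem_comap, ΨK_ι, ΦA_X4]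
          exact Subfield.subset_closure (Or.inr (by simp))
    have := hcomap hmem
    rw [Subfield.mem_comap, ΨK_σK] at this
    exact this
  · -- easy direction
    intro hmem
    let S : Subfield K5 :=
      { carrier := {t | ξ' t = 0}
        mul_mem' := by
          intro s t hs ht
          simp only [Set.mem_setOf_eq] at *
          rw [hmul, hs, ht, zero_mul, mul_zero, add_zero]
        one_mem' := h1
        add_mem' := by
          intro s t hs ht
          simp only [Set.mem_setOf_eq] at *
          rw [hadd, hs, ht, add_zero]
        zero_mem' := hz0
        neg_mem' := by
          intro t ht
          simp only [Set.mem_setOf_eq] at *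
          have h := hadd t (-t)
          rw [add_neg_cancel, hz0, ht, zero_add] at h
          exact h.symm
        inv_mem' := by
          intro t ht
          simp only [Set.mem_setOf_eq] at *
          by_cases ht0 : t = 0
          · rw [ht0, inv_zero]; exact hz0
          · have h := hmul t t⁻¹
            rw [mul_inv_cancel₀ ht0, h1, ht, zero_mul, zero_add] at h
            rcases mul_eq_zero.mp h.symm with h' | h'
            · exact absurd h' ht0
            · exact h' }
    have hle : Subfield.closure
        ((Set.range fun c : ℂ => ι (C c)) ∪ {ι I1, ι I2, ι I3, ι I4}) ≤ S := by
      apply Subfield.closure_le.mpr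
      intro t ht
      rcases ht with ⟨c, rfl⟩ | h
      · show ξ' (ι (C c)) = 0
        rw [hext, show ξ (C c) = 0 from Derivation.map_algebraMap ξ c, map_zero]
      · simp only [Set.mem_insert_iff, Set.mem_singleton_iff] at h
        rcases h with rfl | rfl | rfl | rfl
        · show ξ' (ι I1) = 0
          rw [hext, show ξ I1 = 0 from ha, map_zero]
        · show ξ' (ι I2) = 0
          rw [hext, show ξ I2 = 0 from hb, map_zero]
        · show ξ' (ι I3) = 0
          rw [hext, ξI3 ξ ha hb hx hy, map_zero]
        · show ξ' (ι I4) = 0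
          rw [hext, ξI4 ξ ha hb hx hy hz, map_zero]
    exact hle hmem
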